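/- Let X and Y be separable metric spaces, let ε > 0, and let f : X → Y be a function such that osc_f(x) ≥ ε for all x ∈ X. Then there is a countable subset Q ⊆ X such that osc_{f↾Q}(x) ≥ ε for all x ∈ X. -/

import Mathlib

open Filter Topology TopologicalSpace
open scoped ENNReal NNReal

/-- The pointwise oscillation at `x ∈ X` of (the restriction to `A` of) `f`, valued in
`[0, ∞]`: the infimum over open neighborhoods `U` of `x` of `diam (f '' (U ∩ A))`. -/
noncomputable def osc {X Y : Type*} [TopologicalSpace X] [PseudoMetricSpace Y]
    (f : X → Y) (A : Set X) (x : X) : ENNReal :=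
  ⨅ (U : Set X) (_ : IsOpen U) (_ : x ∈ U), EMetric.diam (f '' (U ∩ A))

/-- Let `X, Y` be separable metric spaces, `ε > 0` and `f : X → Y` such that
`osc_f x ≥ ε` for all `x ∈ X`. Then there is a countable `Q ⊆ X` such that
`osc_{f↾Q} x ≥ ε` for all `x ∈ X`. -/
theorem exists_countable_osc_ge {X Y : Type*} [MetricSpace X] [MetricSpace Y]
    [SeparableSpace X] [SeparableSpace Y]
    (f : X → Y) (ε : ℝ) (hε : 0 < ε)
    (h : ∀ x : X, ENNReal.ofReal ε ≤ osc f Set.univ x) :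
    ∃ Q : Set X, Q.Countable ∧ ∀ x : X, ENNReal.ofReal ε ≤ osc f Q x := by
  haveI : SecondCountableTopology X := UniformSpace.secondCountable_of_separable X
  obtain ⟨b, hbc, hbne, hbasis⟩ := TopologicalSpace.exists_countable_basis X
  have hεne : ENNReal.ofReal ε ≠ 0 := by
    simp [ENNReal.ofReal_eq_zero, not_le, hε]
  -- key: each basis set contains pairs with large edist of images
  have key : ∀ (U : b) (n : ℕ), ∃ p : X × X, p.1 ∈ (U : Set X) ∧ p.2 ∈ (U : Set X) ∧
      ENNReal.ofReal ε - (n : ℝ≥0∞)⁻¹ < edist (f p.1) (f p.2) := by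
    rintro ⟨U, hU⟩ n
    have hUopen : IsOpen U := hbasis.isOpen hU
    obtain ⟨x, hx⟩ : U.Nonempty := Set.nonempty_iff_ne_empty.2 (fun hh => hbne (hh ▸ hU))
    have hle : ENNReal.ofReal ε ≤ EMetric.diam (f '' (U ∩ Set.univ)) := by
      refine (h x).trans ?_
      exact iInf_le_of_le U (iInf_le_of_le hUopen (iInf_le _ hx))
    rw [Set.inter_univ] at hle
    have hlt : ENNReal.ofReal ε - (n : ℝ≥0∞)⁻¹ < EMetric.diam (f '' U) := by
      refine lt_of_lt_of_le ?_ hle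
      exact ENNReal.sub_lt_self ENNReal.ofReal_ne_top hεne (by simp)
    rw [← not_le, EMetric.diam, Metric.ediam_le_iff] at hlt
    push_neg at hlt
    obtain ⟨y, hy, z, hz, hyz⟩ := hlt
    obtain ⟨a, ha, rfl⟩ := hy
    obtain ⟨c, hc, rfl⟩ := hz
    exact ⟨(a, c), ha, hc, hyz⟩
  choose g hg1 hg2 hg3 using key
  haveI : Countable b := hbc.to_subtype
  refine ⟨⋃ (U : b) (n : ℕ), {(g U n).1, (g U n).2}, ?_, ?_⟩
  · exact Set.countable_iUnion fun U => Set.countable_iUnion fun n =>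
      ((Set.finite_singleton _).insert _).countable
  · intro x
    refine le_iInf fun V => le_iInf fun hV => le_iInf fun hxV => ?_
    obtain ⟨U, hUb, hxU, hUV⟩ := hbasis.exists_subset_of_mem_open hxV hV
    -- for every n, ofReal ε - n⁻¹ ≤ diam
    have hn : ∀ n : ℕ, ENNReal.ofReal ε - (n : ℝ≥0∞)⁻¹ ≤
        EMetric.diam (f '' (V ∩ ⋃ (W : b) (m : ℕ), {(g W m).1, (g W m).2})) := by
      intro n
      refine le_of_lt (lt_of_lt_of_le (hg3 ⟨U, hUb⟩ n) ?_)
      have hm1 : (g ⟨U, hUb⟩ n).1 ∈ V ∩ ⋃ (W : b) (m : ℕ), {(g W m).1, (g W m).2} :=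
        ⟨hUV (hg1 ⟨U, hUb⟩ n), Set.mem_iUnion.2 ⟨⟨U, hUb⟩, Set.mem_iUnion.2 ⟨n, by simp⟩⟩⟩
      have hm2 : (g ⟨U, hUb⟩ n).2 ∈ V ∩ ⋃ (W : b) (m : ℕ), {(g W m).1, (g W m).2} :=
        ⟨hUV (hg2 ⟨U, hUb⟩ n), Set.mem_iUnion.2 ⟨⟨U, hUb⟩, Set.mem_iUnion.2 ⟨n, by simp⟩⟩⟩
      exact EMetric.edist_le_diam_of_mem (Set.mem_image_of_mem f hm1)
        (Set.mem_image_of_mem f hm2)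
    refine ENNReal.le_of_forall_pos_le_add fun δ hδ _ => ?_
    obtain ⟨n, hnδ⟩ := ENNReal.exists_inv_nat_lt (by exact_mod_cast hδ.ne' : (δ : ℝ≥0∞) ≠ 0)
    calc ENNReal.ofReal ε ≤ (ENNReal.ofReal ε - (n : ℝ≥0∞)⁻¹) + (n : ℝ≥0∞)⁻¹ := le_tsub_add
      _ ≤ _ + (δ : ℝ≥0∞) := add_le_add (hn n) hnδ.le
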